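/- Any nonnegative integrable α on [0,T] satisfying ∫_0^T α(t) dt = ln σ_s − ln σ_0 + aT and ∫_0^t α(s) ds ≥ ln σ_M − ln σ_0 + a t for all t ∈ [0,T] minimizes P(α) = ∫_0^T α(t) dt among all nonnegative controls satisfying the constraints σ(T) ≥ σ_s and σ(t) ≥ σ_M for all t ∈ [0,T]. -/
import Mathlib


open MeasureTheory Real intervalIntegral

/-- Any nonnegative integrable control `α` whose total effort equals
`ln σ_s − ln σ₀ + aT` and whose partial efforts dominate `ln σ_M − ln σ₀ + at`
minimizes the total effort among all admissible controls for problem 𝒫. -/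
theorem optimal_control_of_anger (a σM σ₀ σs T : ℝ) (ha : 0 < a) (hσM : 0 < σM)
    (h₀ : σM < σ₀) (hs : σ₀ < σs) (hT : 0 < T)
    (α : ℝ → ℝ) (hα : IntervalIntegrable α volume 0 T) (hαpos : ∀ t, 0 ≤ α t)
    (hαeq : (∫ t in (0:ℝ)..T, α t) = Real.log σs - Real.log σ₀ + a * T)
    (hαineq : ∀ t ∈ Set.Icc (0:ℝ) T,
      (∫ s in (0:ℝ)..t, α s) ≥ Real.log σM - Real.log σ₀ + a * t) :
    ∀ β : ℝ → ℝ, IntervalIntegrable β volume 0 T → (∀ t, 0 ≤ β t) →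
      σ₀ * Real.exp (-a * T + ∫ s in (0:ℝ)..T, β s) ≥ σs →
      (∀ t ∈ Set.Icc (0:ℝ) T,
        σ₀ * Real.exp (-a * t + ∫ s in (0:ℝ)..t, β s) ≥ σM) →
      (∫ t in (0:ℝ)..T, α t) ≤ ∫ t in (0:ℝ)..T, β t := by
  intro β hβ hβpos hβT hβM
  have hσ0 : (0:ℝ) < σ₀ := lt_trans hσM h₀
  have hlog : Real.log σs ≤ Real.log σ₀ + (-a * T + ∫ s in (0:ℝ)..T, β s) := by
    have := Real.log_le_log (lt_trans (lt_trans hσM h₀) hs) hβT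
    rwa [Real.log_mul (ne_of_gt hσ0) (Real.exp_ne_zero _), Real.log_exp] at this
  rw [hαeq]; linarith
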